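/- Let a, b, c, M be integers with 1 < a < b < c, 1 + c = a + b, and a ∤ b. Then for every L ≥ 0, every coefficient of 1/((q;q^M)_L (q^c;q^M)_L) - 1/((q^a;q^M)_L (q^b;q^M)_L) is nonnegative. -/

import Mathlib

open PowerSeries Finset

namespace BG2


/-- The geometric-type series `∑ X^{ek}`. -/
noncomputable def S (e : ℕ) : ℚ⟦X⟧ := PowerSeries.mk fun n => if e ∣ n then 1 else 0

lemma one_sub_mul_S (e : ℕ) (he : e ≠ 0) : (1 - (X : ℚ⟦X⟧) ^ e) * S e = 1 := by
  ext n
  rw [sub_mul, one_mul, map_sub, PowerSeries.coeff_X_pow_mul']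
  simp only [S, PowerSeries.coeff_mk, PowerSeries.coeff_one]
  rcases Nat.eq_zero_or_pos n with rfl | hn
  · rw [if_pos (dvd_zero e), if_neg (by omega), if_pos rfl, sub_zero]
  · rw [if_neg (by omega : ¬ n = 0)]
    by_cases hle : e ≤ n
    · rw [if_pos hle]
      have hiff : e ∣ n ↔ e ∣ n - e := by
        constructor
        · intro h; exact Nat.dvd_sub h dvd_rfl
        · intro h
          have := Nat.dvd_add h (dvd_refl e)
          rwa [Nat.sub_add_cancel hle] at this
      by_cases hd : e ∣ n
      · rw [if_pos hd, if_pos (hiff.mp hd), sub_self]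
      · rw [if_neg hd, if_neg (fun hh => hd (hiff.mpr hh)), sub_self]
    · rw [if_neg hle, sub_zero,
        if_neg (Nat.not_dvd_of_pos_of_lt hn (by omega))]

lemma prod_inv_eq (L : ℕ) (E : ℕ → ℕ) (hE : ∀ j, E j ≠ 0) :
    (∏ j ∈ range L, (1 - (X : ℚ⟦X⟧) ^ (E j)))⁻¹ = ∏ j ∈ range L, S (E j) := by
  rw [PowerSeries.inv_eq_iff_mul_eq_one]
  · rw [← Finset.prod_mul_distrib]
    exact Finset.prod_eq_one fun j _ => by
      rw [mul_comm]; exact one_sub_mul_S (E j) (hE j)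
  · rw [map_prod]
    rw [Finset.prod_eq_one fun j _ => ?_]
    · exact one_ne_zero
    · rw [map_sub, map_one, map_pow, PowerSeries.constantCoeff_X,
        zero_pow (hE j), sub_zero]

lemma coeff_prod_S (N n : ℕ) (E : ℕ → ℕ) :
    PowerSeries.coeff n (∏ j ∈ range N, S (E j)) =
      ((finsuppAntidiag (range N) n).filter fun l => ∀ j ∈ range N, E j ∣ l j).card := by
  rw [PowerSeries.coeff_prod]
  calc (∑ l ∈ finsuppAntidiag (range N) n, ∏ i ∈ range N, PowerSeries.coeff (l i) (S (E i)))
      = ∑ l ∈ finsuppAntidiag (range N) n,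
          (if ∀ j ∈ range N, E j ∣ l j then (1 : ℚ) else 0) := by
        refine Finset.sum_congr rfl fun l _ => ?_
        simp only [S, PowerSeries.coeff_mk]
        exact Finset.prod_boole
    _ = ((finsuppAntidiag (range N) n).filter fun l => ∀ j ∈ range N, E j ∣ l j).card := by
        rw [Finset.sum_boole]



def ksum (L : ℕ) (f : ℕ → ℕ) : ℕ := ∑ j ∈ range L, f j
def msum (L : ℕ) (f : ℕ → ℕ) : ℕ := ∑ j ∈ range L, f (L + j)
def jsum (L : ℕ) (f : ℕ → ℕ) : ℕ :=
  (∑ j ∈ range L, j * f j) + ∑ j ∈ range L, j * f (L + j)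

/-- The exponent pattern: first block `e₁ + M j`, second block `e₂ + M j`. -/
def Ef (e₁ e₂ M L : ℕ) : ℕ → ℕ := fun j => if j < L then e₁ + M * j else e₂ + M * (j - L)

lemma sumE (M L e₁ e₂ : ℕ) (f : ℕ → ℕ) :
    (∑ j ∈ range (2 * L), Ef e₁ e₂ M L j * f j)
      = e₁ * ksum L f + e₂ * msum L f + M * jsum L f := by
  rw [two_mul, Finset.sum_range_add]
  have h1 : ∀ j ∈ range L, Ef e₁ e₂ M L j * f j = e₁ * f j + M * (j * f j) := by
    intro j hj
    rw [Ef, if_pos (mem_range.mp hj)]; ring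
  have h2 : ∀ j ∈ range L, Ef e₁ e₂ M L (L + j) * f (L + j)
      = e₂ * f (L + j) + M * (j * f (L + j)) := by
    intro j hj
    rw [Ef, if_neg (by omega), (by omega : L + j - L = j)]; ring
  rw [Finset.sum_congr rfl h1, Finset.sum_congr rfl h2,
    Finset.sum_add_distrib, Finset.sum_add_distrib,
    ← Finset.mul_sum, ← Finset.mul_sum, ← Finset.mul_sum, ← Finset.mul_sum]
  rw [ksum, msum, jsum]; ring

lemma ksum_update_zero {L : ℕ} (hL : 0 < L) (f : ℕ → ℕ) (v : ℕ) :
    ksum L (Function.update f 0 (f 0 + v)) = ksum L f + v := by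
  rw [ksum, Finset.sum_update_of_mem (mem_range.mpr hL), ksum,
    Finset.sum_eq_sum_sdiff_singleton_add (mem_range.mpr hL) f]
  omega

lemma msum_update_zero {L : ℕ} (hL : 0 < L) (f : ℕ → ℕ) (v : ℕ) :
    msum L (Function.update f 0 v) = msum L f := by
  refine Finset.sum_congr rfl fun j _ => ?_
  exact Function.update_of_ne (by omega) _ _

lemma jsum_update_zero {L : ℕ} (f : ℕ → ℕ) (v : ℕ) (hL : 0 < L) :
    jsum L (Function.update f 0 v) = jsum L f := by
  rw [jsum, jsum]
  congr 1
  · refine Finset.sum_congr rfl fun j _ => ?_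
    rcases Nat.eq_zero_or_pos j with rfl | hj
    · simp
    · rw [Function.update_of_ne (by omega)]
  · refine Finset.sum_congr rfl fun j _ => ?_
    rw [Function.update_of_ne (by omega)]

lemma ksum_update_L {L : ℕ} (f : ℕ → ℕ) (v : ℕ) :
    ksum L (Function.update f L v) = ksum L f := by
  refine Finset.sum_congr rfl fun j hj => ?_
  exact Function.update_of_ne (by have := mem_range.mp hj; omega) _ _

lemma msum_update_L {L : ℕ} (hL : 0 < L) (f : ℕ → ℕ) (v : ℕ) :
    msum L (Function.update f L (f L + v)) = msum L f + v := by
  have key : ∀ j, Function.update f L (f L + v) (L + j)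
      = Function.update (fun i => f (L + i)) 0 ((fun i => f (L + i)) 0 + v) j := by
    intro j
    rcases Nat.eq_zero_or_pos j with rfl | hj
    · simp [Function.update_self]
    · rw [Function.update_of_ne (by omega), Function.update_of_ne (by omega)]
  rw [msum, Finset.sum_congr rfl fun j _ => key j]
  exact ksum_update_zero hL (fun i => f (L + i)) v

lemma jsum_update_L {L : ℕ} (hL : 0 < L) (f : ℕ → ℕ) (v : ℕ) :
    jsum L (Function.update f L v) = jsum L f := by
  rw [jsum, jsum]
  congr 1
  · refine Finset.sum_congr rfl fun j hj => ?_
    rw [Function.update_of_ne (by have := mem_range.mp hj; omega)]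
  · refine Finset.sum_congr rfl fun j _ => ?_
    rcases Nat.eq_zero_or_pos j with rfl | hj
    · simp
    · rw [Function.update_of_ne (by omega)]

def swp (L : ℕ) (f : ℕ → ℕ) : ℕ → ℕ := fun j => if j < L then f (L + j) else f (j - L)

lemma swp_add_L (L : ℕ) (f : ℕ → ℕ) (j : ℕ) : swp L f (L + j) = f j := by
  show (if L + j < L then f (L + (L + j)) else f (L + j - L)) = f j
  rw [if_neg (by omega), (by omega : L + j - L = j)]

lemma ksum_swp (L : ℕ) (f : ℕ → ℕ) : ksum L (swp L f) = msum L f := by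
  refine Finset.sum_congr rfl fun j hj => ?_
  show (if j < L then f (L + j) else f (j - L)) = f (L + j)
  rw [if_pos (mem_range.mp hj)]

lemma msum_swp (L : ℕ) (f : ℕ → ℕ) : msum L (swp L f) = ksum L f := by
  exact Finset.sum_congr rfl fun j _ => swp_add_L L f j

lemma jsum_swp (L : ℕ) (f : ℕ → ℕ) : jsum L (swp L f) = jsum L f := by
  rw [jsum, jsum, add_comm]
  congr 1
  · refine Finset.sum_congr rfl fun j _ => ?_
    rw [swp_add_L]
  · refine Finset.sum_congr rfl fun j hj => ?_
    show j * (if j < L then f (L + j) else f (j - L)) = j * f (L + j)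
    rw [if_pos (mem_range.mp hj)]

lemma swp_zero {L : ℕ} (hL : 0 < L) (f : ℕ → ℕ) : swp L f 0 = f L := by
  show (if 0 < L then f (L + 0) else f (0 - L)) = f L
  rw [if_pos hL]
  rfl

lemma swp_L (L : ℕ) (f : ℕ → ℕ) : swp L f L = f 0 := by
  show (if L < L then f (L + L) else f (L - L)) = f 0
  rw [if_neg (by omega), (by omega : L - L = 0)]


def phi (a b c L : ℕ) (t : ℕ → ℕ) : ℕ → ℕ :=
  if msum L t ≤ ksum L t then
    Function.update t 0 (t 0 + (a - 1) * (ksum L t - msum L t))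
  else if a ∣ b * (msum L t - ksum L t) then
    Function.update (Function.update (swp L t) 0
      (swp L t 0 + ((b - 1) * (msum L t - ksum L t) - c))) L (swp L t L + 1)
  else
    Function.update (swp L t) 0 (swp L t 0 + (b - 1) * (msum L t - ksum L t))

lemma phi_eq1 {a b c L : ℕ} {t : ℕ → ℕ} (h : msum L t ≤ ksum L t) :
    phi a b c L t = Function.update t 0 (t 0 + (a - 1) * (ksum L t - msum L t)) := by
  rw [phi, if_pos h]

lemma phi_eq2a {a b c L : ℕ} {t : ℕ → ℕ} (h : ¬ msum L t ≤ ksum L t)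
    (hd : ¬ a ∣ b * (msum L t - ksum L t)) :
    phi a b c L t = Function.update (swp L t) 0
      (swp L t 0 + (b - 1) * (msum L t - ksum L t)) := by
  rw [phi, if_neg h, if_neg hd]

lemma phi_eq2b {a b c L : ℕ} {t : ℕ → ℕ} (h : ¬ msum L t ≤ ksum L t)
    (hd : a ∣ b * (msum L t - ksum L t)) :
    phi a b c L t = Function.update (Function.update (swp L t) 0
      (swp L t 0 + ((b - 1) * (msum L t - ksum L t) - c))) L (swp L t L + 1) := by
  rw [phi, if_neg h, if_pos hd]

/-- Master structural lemma about `phi`. -/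
lemma phi_sig {a b c L : ℕ} (ha : 1 < a) (hab : a < b) (hsum : 1 + c = a + b)
    (hdvd : ¬ a ∣ b) (hL : 0 < L) (t : ℕ → ℕ) :
    jsum L (phi a b c L t) = jsum L t ∧
    ksum L (phi a b c L t) + c * msum L (phi a b c L t)
      = a * ksum L t + b * msum L t ∧
    ((msum L t ≤ ksum L t ∧ msum L (phi a b c L t) = msum L t ∧
        ksum L (phi a b c L t)
          = msum L (phi a b c L t) + a * (ksum L t - msum L t) ∧
        a ∣ (ksum L (phi a b c L t) - msum L (phi a b c L t)))
     ∨ (ksum L t < msum L t ∧ ¬ a ∣ b * (msum L t - ksum L t) ∧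
        msum L (phi a b c L t) = ksum L t ∧
        ksum L (phi a b c L t)
          = msum L (phi a b c L t) + b * (msum L t - ksum L t) ∧
        ¬ a ∣ (ksum L (phi a b c L t) - msum L (phi a b c L t)) ∧
        b ∣ (ksum L (phi a b c L t) - msum L (phi a b c L t)))
     ∨ (ksum L t < msum L t ∧ a ∣ b * (msum L t - ksum L t) ∧
        msum L (phi a b c L t) = ksum L t + 1 ∧
        ksum L (phi a b c L t) + (a + b)
          = msum L (phi a b c L t) + b * (msum L t - ksum L t) ∧
        ¬ a ∣ (ksum L (phi a b c L t) - msum L (phi a b c L t)) ∧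
        ¬ b ∣ (ksum L (phi a b c L t) - msum L (phi a b c L t)))) := by
  set k := ksum L t with hk
  set m := msum L t with hm
  obtain ⟨a', rfl⟩ : ∃ a', a = a' + 1 := ⟨a - 1, by omega⟩
  obtain ⟨b', rfl⟩ : ∃ b', b = b' + 1 := ⟨b - 1, by omega⟩
  have hc : c = a' + b' + 1 := by omega
  by_cases h1 : m ≤ k
  · -- case 1
    obtain ⟨e, he⟩ : ∃ e, k = m + e := ⟨k - m, by omega⟩
    have hKe : ksum L (phi (a'+1) (b'+1) c L t) = k + a' * e := by
      rw [phi_eq1 h1, ksum_update_zero hL, ← hk, ← hm, he, Nat.add_sub_cancel_left]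
      simp
    have hMe : msum L (phi (a'+1) (b'+1) c L t) = m := by
      rw [phi_eq1 h1, msum_update_zero hL]
    have hJe : jsum L (phi (a'+1) (b'+1) c L t) = jsum L t := by
      rw [phi_eq1 h1, jsum_update_zero _ _ hL]
    have hkm : k - m = e := by omega
    have hmul : (a' + 1) * e = a' * e + e := by ring
    have hmul2 : m + c * m = (a' + 1) * m + (b' + 1) * m := by
      have : m + c * m = (1 + c) * m := by ring
      rw [this, hsum]; ring
    refine ⟨hJe, ?_, Or.inl ⟨h1, hMe, ?_, ?_⟩⟩
    · rw [hKe, hMe]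
      have hbm : (b' + 1) * m = b' * m + m := by ring
      have ham : (a' + 1) * m = a' * m + m := by ring
      have hak : (a' + 1) * k = (a' + 1) * m + (a' + 1) * e := by rw [he]; ring
      omega
    · rw [hKe, hMe, hkm]; omega
    · rw [hKe, hMe]
      exact ⟨e, by omega⟩
  · -- case 2
    obtain ⟨e, he⟩ : ∃ e, m = k + e := ⟨m - k, by omega⟩
    have hmk : m - k = e := by omega
    have he1 : 1 ≤ e := by omega
    have hswk : ksum L (swp L t) = m := by rw [ksum_swp]
    have hswm : msum L (swp L t) = k := by rw [msum_swp]
    have hmul : (b' + 1) * e = b' * e + e := by ring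
    have hmul2 : k + c * k = (a' + 1) * k + (b' + 1) * k := by
      have : k + c * k = (1 + c) * k := by ring
      rw [this, hsum]; ring
    have hbk : (b' + 1) * m = (b' + 1) * k + (b' + 1) * e := by rw [he]; ring
    by_cases h2 : (a' + 1) ∣ (b' + 1) * (m - k)
    · -- case 2b
      have h2' : (a' + 1) ∣ (b' + 1) * e := by rwa [hmk] at h2
      have he2 : 2 ≤ e := by
        rcases Nat.lt_or_ge e 2 with h | h
        · exfalso
          have : e = 1 := by omega
          rw [this, mul_one] at h2'
          exact hdvd h2'
        · exact h
      have hb'a : a' < b' := by omega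
      have hbe2 : b' * 2 ≤ b' * e := Nat.mul_le_mul_left _ he2
      have hce : c ≤ b' * e := by omega
      have hBe2 : (b' + 1) * 2 ≤ (b' + 1) * e := Nat.mul_le_mul_left _ he2
      have hBe2' : (b' + 1) * 2 = (b' + 1) + (b' + 1) := by ring
      have hd1 : (b' + 1 - 1) * (m - k) = b' * e := by rw [hmk]; simp
      have hgL : Function.update (swp L t) 0
          (swp L t 0 + ((b' + 1 - 1) * (msum L t - ksum L t) - c)) L = swp L t L :=
        Function.update_of_ne (by omega) _ _
      have hphi : phi (a'+1) (b'+1) c L t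
          = Function.update (Function.update (swp L t) 0
              (swp L t 0 + (b' * e - c))) L (swp L t L + 1) := by
        rw [phi_eq2b h1 h2, ← hk, ← hm, hd1]
      have hKe : ksum L (phi (a'+1) (b'+1) c L t) = m + (b' * e - c) := by
        rw [hphi, ksum_update_L, ksum_update_zero hL, hswk]
      have hMe : msum L (phi (a'+1) (b'+1) c L t) = k + 1 := by
        rw [hphi]
        have hgL2 : Function.update (swp L t) 0 (swp L t 0 + (b' * e - c)) L
            = swp L t L := Function.update_of_ne (by omega) _ _
        rw [← hgL2, msum_update_L hL, msum_update_zero hL, hswm]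
      have hJe : jsum L (phi (a'+1) (b'+1) c L t) = jsum L t := by
        rw [hphi, jsum_update_L hL, jsum_update_zero _ _ hL, jsum_swp]
      have hdval : ksum L (phi (a'+1) (b'+1) c L t) - msum L (phi (a'+1) (b'+1) c L t)
          = (b' + 1) * e - ((a' + 1) + (b' + 1)) := by
        rw [hKe, hMe]; omega
      have hvv : (b' + 1) * e
          - (ksum L (phi (a'+1) (b'+1) c L t) - msum L (phi (a'+1) (b'+1) c L t))
          = (a' + 1) + (b' + 1) := by
        rw [hdval]; omega
      refine ⟨hJe, ?_, Or.inr (Or.inr ⟨by omega, h2, hMe, ?_, ?_, ?_⟩)⟩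
      · rw [hKe, hMe]
        have hak : (a' + 1) * m = (a' + 1) * k + (a' + 1) * e := by rw [he]; ring
        have hckk : c * (k + 1) = c * k + c := by ring
        omega
      · rw [hKe, hMe, hmk]; omega
      · intro had
        have had2 : (a' + 1) ∣ (a' + 1) + (b' + 1) := by
          rw [← hvv]; exact Nat.dvd_sub h2' had
        exact hdvd ((Nat.dvd_add_right (dvd_refl _)).mp had2)
      · intro hbd
        have hbd2 : (b' + 1) ∣ (a' + 1) + (b' + 1) := by
          rw [← hvv]; exact Nat.dvd_sub (dvd_mul_right _ _) hbd
        have : (b' + 1) ∣ (a' + 1) := (Nat.dvd_add_iff_left (dvd_refl _)).mpr hbd2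
        have := Nat.le_of_dvd (by omega) this
        omega
    · -- case 2a
      have hKe : ksum L (phi (a'+1) (b'+1) c L t) = m + b' * e := by
        rw [phi_eq2a h1 h2, ksum_update_zero hL, hswk, ← hk, ← hm, hmk]
        norm_num
      have hMe : msum L (phi (a'+1) (b'+1) c L t) = k := by
        rw [phi_eq2a h1 h2, msum_update_zero hL, hswm]
      have hJe : jsum L (phi (a'+1) (b'+1) c L t) = jsum L t := by
        rw [phi_eq2a h1 h2, jsum_update_zero _ _ hL, jsum_swp]
      have hd : ksum L (phi (a'+1) (b'+1) c L t) - msum L (phi (a'+1) (b'+1) c L t)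
          = (b' + 1) * e := by rw [hKe, hMe]; omega
      refine ⟨hJe, ?_, Or.inr (Or.inl ⟨by omega, h2, hMe, ?_, ?_, ?_⟩)⟩
      · rw [hKe, hMe]
        have hak : (a' + 1) * m = (a' + 1) * k + (a' + 1) * e := by rw [he]; ring
        have hck : c * k = c * k := rfl
        -- goal: m + b' * e + c * k = (a'+1)*k + (b'+1)*m
        omega
      · rw [hKe, hMe, hmk]; omega
      · rw [hd]; rwa [hmk] at h2
      · rw [hd]; exact dvd_mul_right _ e
lemma recover1 {a b c L : ℕ} (hL : 0 < L) {t₁ t₂ : ℕ → ℕ}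
    (h1 : msum L t₁ ≤ ksum L t₁) (h2 : msum L t₂ ≤ ksum L t₂)
    (hk : ksum L t₁ = ksum L t₂) (hm : msum L t₁ = msum L t₂)
    (hz₁ : ∀ j, 2 * L ≤ j → t₁ j = 0) (hz₂ : ∀ j, 2 * L ≤ j → t₂ j = 0)
    (heq : ∀ j < 2 * L, phi a b c L t₁ j = phi a b c L t₂ j) : t₁ = t₂ := by
  funext j
  rcases Nat.lt_or_ge j (2 * L) with hj | hj
  · have hh := heq j hj
    rw [phi_eq1 h1, phi_eq1 h2] at hh
    rcases Nat.eq_zero_or_pos j with rfl | hj0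
    · rw [Function.update_self, Function.update_self, hk, hm] at hh
      omega
    · rwa [Function.update_of_ne (by omega), Function.update_of_ne (by omega)] at hh
  · rw [hz₁ j hj, hz₂ j hj]

lemma recover2a {a b c L : ℕ} (hL : 0 < L) {t₁ t₂ : ℕ → ℕ}
    (h1 : ¬ msum L t₁ ≤ ksum L t₁) (hd1 : ¬ a ∣ b * (msum L t₁ - ksum L t₁))
    (h2 : ¬ msum L t₂ ≤ ksum L t₂) (hd2 : ¬ a ∣ b * (msum L t₂ - ksum L t₂))
    (hk : ksum L t₁ = ksum L t₂) (hm : msum L t₁ = msum L t₂)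
    (hz₁ : ∀ j, 2 * L ≤ j → t₁ j = 0) (hz₂ : ∀ j, 2 * L ≤ j → t₂ j = 0)
    (heq : ∀ j < 2 * L, phi a b c L t₁ j = phi a b c L t₂ j) : t₁ = t₂ := by
  have hδ : (b - 1) * (msum L t₁ - ksum L t₁) = (b - 1) * (msum L t₂ - ksum L t₂) := by
    rw [hk, hm]
  funext j
  rcases Nat.lt_or_ge j (2 * L) with hj | hj
  · rcases Nat.lt_or_ge j L with hjL | hjL
    · -- j < L : use position L + j
      have e1 : phi a b c L t₁ (L + j) = t₁ j := by
        rw [phi_eq2a h1 hd1, Function.update_of_ne (by omega), swp_add_L]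
      have e2 : phi a b c L t₂ (L + j) = t₂ j := by
        rw [phi_eq2a h2 hd2, Function.update_of_ne (by omega), swp_add_L]
      rw [← e1, ← e2]
      exact heq (L + j) (by omega)
    · rcases Nat.eq_or_lt_of_le hjL with rfl | hjL2
      · -- j = L : use position 0
        have e1 : phi a b c L t₁ 0 = t₁ L + (b - 1) * (msum L t₁ - ksum L t₁) := by
          rw [phi_eq2a h1 hd1, Function.update_self, swp_zero hL]
        have e2 : phi a b c L t₂ 0 = t₂ L + (b - 1) * (msum L t₂ - ksum L t₂) := by
          rw [phi_eq2a h2 hd2, Function.update_self, swp_zero hL]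
        have hh := heq 0 (by omega)
        rw [e1, e2] at hh
        omega
      · -- L < j < 2L : use position j - L
        have e1 : phi a b c L t₁ (j - L) = t₁ j := by
          rw [phi_eq2a h1 hd1, Function.update_of_ne (by omega)]
          show (if j - L < L then t₁ (L + (j - L)) else t₁ (j - L - L)) = t₁ j
          rw [if_pos (by omega), (by omega : L + (j - L) = j)]
        have e2 : phi a b c L t₂ (j - L) = t₂ j := by
          rw [phi_eq2a h2 hd2, Function.update_of_ne (by omega)]
          show (if j - L < L then t₂ (L + (j - L)) else t₂ (j - L - L)) = t₂ j
          rw [if_pos (by omega), (by omega : L + (j - L) = j)]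
        rw [← e1, ← e2]
        exact heq (j - L) (by omega)
  · rw [hz₁ j hj, hz₂ j hj]

lemma recover2b {a b c L : ℕ} (hL : 0 < L) {t₁ t₂ : ℕ → ℕ}
    (h1 : ¬ msum L t₁ ≤ ksum L t₁) (hd1 : a ∣ b * (msum L t₁ - ksum L t₁))
    (h2 : ¬ msum L t₂ ≤ ksum L t₂) (hd2 : a ∣ b * (msum L t₂ - ksum L t₂))
    (hk : ksum L t₁ = ksum L t₂) (hm : msum L t₁ = msum L t₂)
    (hz₁ : ∀ j, 2 * L ≤ j → t₁ j = 0) (hz₂ : ∀ j, 2 * L ≤ j → t₂ j = 0)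
    (heq : ∀ j < 2 * L, phi a b c L t₁ j = phi a b c L t₂ j) : t₁ = t₂ := by
  have hδ : (b - 1) * (msum L t₁ - ksum L t₁) - c
      = (b - 1) * (msum L t₂ - ksum L t₂) - c := by rw [hk, hm]
  funext j
  rcases Nat.lt_or_ge j (2 * L) with hj | hj
  · rcases Nat.eq_zero_or_pos j with rfl | hj0
    · -- j = 0 : use position L
      have e1 : phi a b c L t₁ L = t₁ 0 + 1 := by
        rw [phi_eq2b h1 hd1, Function.update_self, swp_L]
      have e2 : phi a b c L t₂ L = t₂ 0 + 1 := by
        rw [phi_eq2b h2 hd2, Function.update_self, swp_L]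
      have hh := heq L (by omega)
      rw [e1, e2] at hh
      omega
    rcases Nat.lt_or_ge j L with hjL | hjL
    · -- 0 < j < L : position L + j  (note L + j ≠ L, ≠ 0)
      have e1 : phi a b c L t₁ (L + j) = t₁ j := by
        rw [phi_eq2b h1 hd1, Function.update_of_ne (by omega),
          Function.update_of_ne (by omega), swp_add_L]
      have e2 : phi a b c L t₂ (L + j) = t₂ j := by
        rw [phi_eq2b h2 hd2, Function.update_of_ne (by omega),
          Function.update_of_ne (by omega), swp_add_L]
      rw [← e1, ← e2]
      exact heq (L + j) (by omega)
    · rcases Nat.eq_or_lt_of_le hjL with rfl | hjL2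
      · -- j = L : position 0
        have e1 : phi a b c L t₁ 0
            = t₁ L + ((b - 1) * (msum L t₁ - ksum L t₁) - c) := by
          rw [phi_eq2b h1 hd1, Function.update_of_ne (by omega),
            Function.update_self, swp_zero hL]
        have e2 : phi a b c L t₂ 0
            = t₂ L + ((b - 1) * (msum L t₂ - ksum L t₂) - c) := by
          rw [phi_eq2b h2 hd2, Function.update_of_ne (by omega),
            Function.update_self, swp_zero hL]
        have hh := heq 0 (by omega)
        rw [e1, e2] at hh
        omega
      · -- L < j < 2L : position j - L (≠ 0, ≠ L)
        have e1 : phi a b c L t₁ (j - L) = t₁ j := by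
          rw [phi_eq2b h1 hd1, Function.update_of_ne (by omega),
            Function.update_of_ne (by omega)]
          show (if j - L < L then t₁ (L + (j - L)) else t₁ (j - L - L)) = t₁ j
          rw [if_pos (by omega), (by omega : L + (j - L) = j)]
        have e2 : phi a b c L t₂ (j - L) = t₂ j := by
          rw [phi_eq2b h2 hd2, Function.update_of_ne (by omega),
            Function.update_of_ne (by omega)]
          show (if j - L < L then t₂ (L + (j - L)) else t₂ (j - L - L)) = t₂ j
          rw [if_pos (by omega), (by omega : L + (j - L) = j)]
        rw [← e1, ← e2]
        exact heq (j - L) (by omega)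
  · rw [hz₁ j hj, hz₂ j hj]

lemma phi_inj {a b c L : ℕ} (ha : 1 < a) (hab : a < b) (hsum : 1 + c = a + b)
    (hdvd : ¬ a ∣ b) (hL : 0 < L) {t₁ t₂ : ℕ → ℕ}
    (hz₁ : ∀ j, 2 * L ≤ j → t₁ j = 0) (hz₂ : ∀ j, 2 * L ≤ j → t₂ j = 0)
    (heq : ∀ j < 2 * L, phi a b c L t₁ j = phi a b c L t₂ j) : t₁ = t₂ := by
  have hK : ksum L (phi a b c L t₁) = ksum L (phi a b c L t₂) :=
    Finset.sum_congr rfl fun j hj => heq j (by have := mem_range.mp hj; omega)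
  have hM : msum L (phi a b c L t₁) = msum L (phi a b c L t₂) :=
    Finset.sum_congr rfl fun j hj => heq (L + j) (by have := mem_range.mp hj; omega)
  have hD : ksum L (phi a b c L t₁) - msum L (phi a b c L t₁)
      = ksum L (phi a b c L t₂) - msum L (phi a b c L t₂) := by rw [hK, hM]
  obtain ⟨-, -, hs₁⟩ := phi_sig ha hab hsum hdvd hL t₁
  obtain ⟨-, -, hs₂⟩ := phi_sig ha hab hsum hdvd hL t₂
  rcases hs₁ with ⟨hle₁, hm₁, hk₁, hdvd₁⟩ | ⟨hlt₁, hnd₁, hm₁, hk₁, hna₁, hb₁⟩ |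
      ⟨hlt₁, hyd₁, hm₁, hk₁, hna₁, hnb₁⟩ <;>
    rcases hs₂ with ⟨hle₂, hm₂, hk₂, hdvd₂⟩ | ⟨hlt₂, hnd₂, hm₂, hk₂, hna₂, hb₂⟩ |
      ⟨hlt₂, hyd₂, hm₂, hk₂, hna₂, hnb₂⟩
  · -- 1 / 1
    have hmm : msum L t₁ = msum L t₂ := by omega
    have hcan : a * (ksum L t₁ - msum L t₁) = a * (ksum L t₂ - msum L t₂) := by omega
    have := Nat.eq_of_mul_eq_mul_left (by omega : 0 < a) hcan
    exact recover1 hL hle₁ hle₂ (by omega) hmm hz₁ hz₂ heq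
  · exact absurd (hD ▸ hdvd₁) hna₂
  · exact absurd (hD ▸ hdvd₁) hna₂
  · exact absurd (hD.symm ▸ hdvd₂) hna₁
  · -- 2a / 2a
    have hkk : ksum L t₁ = ksum L t₂ := by omega
    have hcan : b * (msum L t₁ - ksum L t₁) = b * (msum L t₂ - ksum L t₂) := by omega
    have := Nat.eq_of_mul_eq_mul_left (by omega : 0 < b) hcan
    exact recover2a hL hlt₁.not_ge hnd₁ hlt₂.not_ge hnd₂ hkk (by omega) hz₁ hz₂ heq
  · exact absurd (hD ▸ hb₁) hnb₂
  · exact absurd (hD.symm ▸ hdvd₂) hna₁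
  · exact absurd (hD.symm ▸ hb₂) hnb₁
  · -- 2b / 2b
    have hkk : ksum L t₁ = ksum L t₂ := by omega
    have hcan : b * (msum L t₁ - ksum L t₁) = b * (msum L t₂ - ksum L t₂) := by omega
    have := Nat.eq_of_mul_eq_mul_left (by omega : 0 < b) hcan
    exact recover2b hL hlt₁.not_ge hyd₁ hlt₂.not_ge hyd₂ hkk (by omega) hz₁ hz₂ heq
def solSet (E : ℕ → ℕ) (N n : ℕ) : Finset (ℕ →₀ ℕ) :=
  (finsuppAntidiag (range N) n).filter fun l => ∀ j ∈ range N, E j ∣ l j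

lemma coeff_prod_S' (N n : ℕ) (E : ℕ → ℕ) :
    PowerSeries.coeff n (∏ j ∈ range N, S (E j)) = (solSet E N n).card :=
  coeff_prod_S N n E

lemma card_le {a b c M L n : ℕ} (ha : 1 < a) (hab : a < b) (hsum : 1 + c = a + b)
    (hdvd : ¬ a ∣ b) (hL : 0 < L) :
    (solSet (Ef a b M L) (2 * L) n).card ≤ (solSet (Ef 1 c M L) (2 * L) n).card := by
  classical
  have hEBpos : ∀ j, 0 < Ef 1 c M L j := by
    intro j
    show 0 < if j < L then 1 + M * j else c + M * (j - L)
    split <;> omega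
  set T : (ℕ →₀ ℕ) → (ℕ → ℕ) := fun l j => l j / Ef a b M L j with hT
  -- facts about members
  have key : ∀ l ∈ solSet (Ef a b M L) (2 * L) n,
      (∀ j ∈ range (2 * L), (l : ℕ →₀ ℕ) j = Ef a b M L j * T l j) ∧
      (∀ j, 2 * L ≤ j → T l j = 0) ∧
      (a * ksum L (T l) + b * msum L (T l) + M * jsum L (T l) = n) := by
    intro l hl
    rw [solSet, mem_filter, mem_finsuppAntidiag] at hl
    obtain ⟨⟨hsuml, hsupl⟩, hdl⟩ := hl
    have hrec : ∀ j ∈ range (2 * L), (l : ℕ →₀ ℕ) j = Ef a b M L j * T l j :=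
      fun j hj => (Nat.mul_div_cancel' (hdl j hj)).symm
    have hz : ∀ j, 2 * L ≤ j → T l j = 0 := by
      intro j hj
      have hlz : (l : ℕ →₀ ℕ) j = 0 := by
        by_contra hne
        have := hsupl (Finsupp.mem_support_iff.mpr hne)
        rw [mem_range] at this; omega
      show (l : ℕ →₀ ℕ) j / Ef a b M L j = 0
      rw [hlz]; exact Nat.zero_div _
    refine ⟨hrec, hz, ?_⟩
    rw [← sumE M L a b (T l), ← hsuml]
    exact (Finset.sum_congr rfl fun j hj => hrec j hj).symm
  refine Finset.card_le_card_of_injOn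
    (fun l => Finsupp.onFinset (range (2 * L))
      (fun j => if j < 2 * L then Ef 1 c M L j * phi a b c L (T l) j else 0)
      (fun j h => mem_range.mpr (by by_contra hc; exact h (if_neg hc)))) ?_ ?_
  · -- maps into solSet EB
    intro l hl
    obtain ⟨hrec, hz, hw⟩ := key l hl
    obtain ⟨hJ, hW, -⟩ := phi_sig ha hab hsum hdvd hL (T l)
    rw [solSet, Finset.mem_coe, mem_filter, mem_finsuppAntidiag]
    refine ⟨⟨?_, ?_⟩, ?_⟩
    · -- sum = n
      have : ∀ j ∈ range (2 * L),
          (Finsupp.onFinset (range (2 * L))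
            (fun j => if j < 2 * L then Ef 1 c M L j * phi a b c L (T l) j else 0)
            (fun j h => mem_range.mpr (by by_contra hc; exact h (if_neg hc)))) j
          = Ef 1 c M L j * phi a b c L (T l) j := by
        intro j hj
        rw [Finsupp.onFinset_apply, if_pos (mem_range.mp hj)]
      rw [Finset.sum_congr rfl this, sumE M L 1 c, hJ, one_mul]
      omega
    · exact Finsupp.support_onFinset_subset
    · intro j hj
      rw [Finsupp.onFinset_apply, if_pos (mem_range.mp hj)]
      exact dvd_mul_right _ _
  · -- injective
    intro l₁ h₁' l₂ h₂' hFeq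
    have h₁ : l₁ ∈ solSet (Ef a b M L) (2 * L) n := h₁'
    have h₂ : l₂ ∈ solSet (Ef a b M L) (2 * L) n := h₂'
    obtain ⟨hrec₁, hz₁, -⟩ := key l₁ h₁
    obtain ⟨hrec₂, hz₂, -⟩ := key l₂ h₂
    have ht : T l₁ = T l₂ := by
      refine phi_inj ha hab hsum hdvd hL hz₁ hz₂ ?_
      intro j hj
      have := DFunLike.congr_fun hFeq j
      rw [Finsupp.onFinset_apply, Finsupp.onFinset_apply, if_pos hj, if_pos hj] at this
      exact Nat.eq_of_mul_eq_mul_left (hEBpos j) this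
    apply Finsupp.ext
    intro j
    rcases Nat.lt_or_ge j (2 * L) with hj | hj
    · rw [hrec₁ j (mem_range.mpr hj), hrec₂ j (mem_range.mpr hj), ht]
    · have z1 : T l₁ j = 0 := hz₁ j hj
      have z2 : T l₂ j = 0 := hz₂ j hj
      -- l j = Ef * T l j only inside range; outside, support gives zero
      have s1 : (l₁ : ℕ →₀ ℕ) j = 0 := by
        by_contra hne
        have hmem := Finsupp.mem_support_iff.mpr hne
        rw [solSet, mem_filter, mem_finsuppAntidiag] at h₁
        have := h₁.1.2 hmem
        rw [mem_range] at this; omega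
      have s2 : (l₂ : ℕ →₀ ℕ) j = 0 := by
        by_contra hne
        have hmem := Finsupp.mem_support_iff.mpr hne
        rw [solSet, mem_filter, mem_finsuppAntidiag] at h₂
        have := h₂.1.2 hmem
        rw [mem_range] at this; omega
      rw [s1, s2]
end BG2

open BG2 in
theorem stmt_2 (a b c M : ℕ) (ha : 1 < a) (hab : a < b) (hbc : b < c)
    (hsum : 1 + c = a + b) (hdvd : ¬ a ∣ b) (L n : ℕ) :
    0 ≤ PowerSeries.coeff n
      ((∏ j ∈ range L, (1 - (X : ℚ⟦X⟧) ^ (1 + M * j)))⁻¹ *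
         (∏ j ∈ range L, (1 - (X : ℚ⟦X⟧) ^ (c + M * j)))⁻¹ -
       (∏ j ∈ range L, (1 - (X : ℚ⟦X⟧) ^ (a + M * j)))⁻¹ *
         (∏ j ∈ range L, (1 - (X : ℚ⟦X⟧) ^ (b + M * j)))⁻¹) := by
  rcases Nat.eq_zero_or_pos L with rfl | hL
  · simp
  · rw [prod_inv_eq L (fun j => 1 + M * j) (fun j => by show 1 + M * j ≠ 0; omega),
      prod_inv_eq L (fun j => c + M * j) (fun j => by show c + M * j ≠ 0; omega),
      prod_inv_eq L (fun j => a + M * j) (fun j => by show a + M * j ≠ 0; omega),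
      prod_inv_eq L (fun j => b + M * j) (fun j => by show b + M * j ≠ 0; omega)]
    have hmB : (∏ j ∈ range L, S (1 + M * j)) * (∏ j ∈ range L, S (c + M * j))
        = ∏ j ∈ range (2 * L), S (Ef 1 c M L j) := by
      rw [two_mul, Finset.prod_range_add]
      congr 1
      · refine Finset.prod_congr rfl fun j hj => ?_
        have : Ef 1 c M L j = 1 + M * j := by
          show (if j < L then 1 + M * j else c + M * (j - L)) = 1 + M * j
          rw [if_pos (mem_range.mp hj)]
        rw [this]
      · refine Finset.prod_congr rfl fun j hj => ?_
        have : Ef 1 c M L (L + j) = c + M * j := by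
          show (if L + j < L then 1 + M * (L + j) else c + M * (L + j - L)) = c + M * j
          rw [if_neg (by omega), (by omega : L + j - L = j)]
        rw [this]
    have hmA : (∏ j ∈ range L, S (a + M * j)) * (∏ j ∈ range L, S (b + M * j))
        = ∏ j ∈ range (2 * L), S (Ef a b M L j) := by
      rw [two_mul, Finset.prod_range_add]
      congr 1
      · refine Finset.prod_congr rfl fun j hj => ?_
        have : Ef a b M L j = a + M * j := by
          show (if j < L then a + M * j else b + M * (j - L)) = a + M * j
          rw [if_pos (mem_range.mp hj)]
        rw [this]
      · refine Finset.prod_congr rfl fun j hj => ?_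
        have : Ef a b M L (L + j) = b + M * j := by
          show (if L + j < L then a + M * (L + j) else b + M * (L + j - L)) = b + M * j
          rw [if_neg (by omega), (by omega : L + j - L = j)]
        rw [this]
    rw [hmB, hmA, map_sub, coeff_prod_S' (2 * L) n (Ef 1 c M L),
      coeff_prod_S' (2 * L) n (Ef a b M L), sub_nonneg, Nat.cast_le]
    exact card_le ha hab hsum hdvd hL
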